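/- Let l ∈ {K, D, T, K4, KD4, S4}. A modal formula φ is incomplete for l+5 if and only if there exist two flat finite pointed models (M,a) and (M',a') for l+5 such that M,a ⊨ φ, M',a' ⊨ φ, and (M,a) is not bisimilar modulo P(φ) to (M',a'). -/
import Mathlib


/-- Modal formulas in negation normal form, as in the paper:
φ ::= ⊥ | ⊤ | p | ¬p | φ∧φ | φ∨φ | □φ | ◇φ. -/
inductive Form : Type where
  | bot : Form
  | top : Form
  | pos : ℕ → Form
  | npos : ℕ → Form
  | and : Form → Form → Form
  | or : Form → Form → Form
  | box : Form → Form
  | dia : Form → Form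
deriving DecidableEq

namespace Form

/-- Negation, defined as usual (by De Morgan dualities). -/
def neg : Form → Form
  | bot => top
  | top => bot
  | pos p => npos p
  | npos p => pos p
  | and φ ψ => or φ.neg ψ.neg
  | or φ ψ => and φ.neg ψ.neg
  | box φ => dia φ.neg
  | dia φ => box φ.neg

/-- Implication φ → ψ, defined as usual. -/
def imp (φ ψ : Form) : Form := or φ.neg ψ

/-- Bi-implication φ ↔ ψ, defined as usual. -/
def biimp (φ ψ : Form) : Form := and (imp φ ψ) (imp ψ φ)

/-- P(φ): the set of propositional variables occurring in φ. -/
def vars : Form → Finset ℕ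
  | bot => ∅
  | top => ∅
  | pos p => {p}
  | npos p => {p}
  | and φ ψ => φ.vars ∪ ψ.vars
  | or φ ψ => φ.vars ∪ ψ.vars
  | box φ => φ.vars
  | dia φ => φ.vars

/-- Modal depth. -/
def md : Form → ℕ
  | bot => 0
  | top => 0
  | pos _ => 0
  | npos _ => 0
  | and φ ψ => max φ.md ψ.md
  | or φ ψ => max φ.md ψ.md
  | box φ => φ.md + 1
  | dia φ => φ.md + 1

/-- sub(φ): the set of subformulas of φ. -/
def subf : Form → Finset Form
  | bot => {bot}
  | top => {top}
  | pos p => {pos p}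
  | npos p => {npos p}
  | and φ ψ => insert (and φ ψ) (φ.subf ∪ ψ.subf)
  | or φ ψ => insert (or φ ψ) (φ.subf ∪ ψ.subf)
  | box φ => insert (box φ) φ.subf
  | dia φ => insert (dia φ) φ.subf

/-- s̄ub(φ) = sub(φ) ∪ {¬ψ : ψ ∈ sub(φ)}. -/
def subBar (φ : Form) : Finset Form := φ.subf ∪ φ.subf.image neg

/-- □^k φ : k nested boxes. -/
def boxIter : ℕ → Form → Form
  | 0, φ => φ
  | n + 1, φ => box (boxIter n φ)

def isDia : Form → Bool
  | dia _ => true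
  | _ => false

def isBox : Form → Bool
  | box _ => true
  | _ => false

end Form

/-- Big conjunction over a finite set of formulas (⋀∅ = ⊤). -/
noncomputable def bigAnd (s : Finset Form) : Form := s.toList.foldr Form.and Form.top

/-- Big disjunction over a finite set of formulas (⋁∅ = ⊥). -/
noncomputable def bigOr (s : Finset Form) : Form := s.toList.foldr Form.or Form.bot

/-- th(a) = ⋀ a. -/
noncomputable def th (a : Finset Form) : Form := bigAnd a

/-- A finite Kripke model: a nonempty finite set of states, an accessibility
relation and a valuation. -/
structure Model : Type 1 where
  W : Type
  nonempty : Nonempty W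
  finite : Finite W
  R : W → W → Prop
  V : W → Set ℕ

/-- Satisfaction M,w ⊨ φ. -/
def Model.sat (M : Model) : M.W → Form → Prop
  | _, .bot => False
  | _, .top => True
  | w, .pos p => p ∈ M.V w
  | w, .npos p => p ∉ M.V w
  | w, .and φ ψ => M.sat w φ ∧ M.sat w ψ
  | w, .or φ ψ => M.sat w φ ∨ M.sat w ψ
  | w, .box φ => ∀ v, M.R w v → M.sat v φ
  | w, .dia φ => ∃ v, M.R w v ∧ M.sat v φ

/-- The six base logics K, D, T, K4, KD4, S4. -/
inductive BaseLogic : Type where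
  | K | D | T | K4 | KD4 | S4
deriving DecidableEq

/-- A logic: a base logic, possibly extended by axiom 5. -/
structure Logic : Type where
  base : BaseLogic
  has5 : Bool
deriving DecidableEq

def Logic.K : Logic := ⟨.K, false⟩
def Logic.D : Logic := ⟨.D, false⟩
def Logic.T : Logic := ⟨.T, false⟩
def Logic.K4 : Logic := ⟨.K4, false⟩
def Logic.KD4 : Logic := ⟨.KD4, false⟩
def Logic.S4 : Logic := ⟨.S4, false⟩

/-- l + 5. -/
def BaseLogic.plus5 (b : BaseLogic) : Logic := ⟨b, true⟩

/-- M is a model for the logic l (frame conditions). -/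
def Model.IsFor (M : Model) (l : Logic) : Prop :=
  (match l.base with
    | .K => True
    | .D => ∀ w, ∃ v, M.R w v
    | .T => ∀ w, M.R w w
    | .K4 => ∀ a b c, M.R a b → M.R b c → M.R a c
    | .KD4 => (∀ w, ∃ v, M.R w v) ∧ (∀ a b c, M.R a b → M.R b c → M.R a c)
    | .S4 => (∀ w, M.R w w) ∧ (∀ a b c, M.R a b → M.R b c → M.R a c))
  ∧ (l.has5 = true → ∀ a b c, M.R a b → M.R a c → M.R b c)

/-- φ is satisfiable for l: satisfied at some state of some finite model for l. -/
def Satisfiable (l : Logic) (φ : Form) : Prop :=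
  ∃ M : Model, M.IsFor l ∧ ∃ w : M.W, M.sat w φ

/-- φ is valid for l: satisfied at every state of every finite model for l. -/
def Valid (l : Logic) (φ : Form) : Prop :=
  ∀ M : Model, M.IsFor l → ∀ w : M.W, M.sat w φ

/-- φ is complete for l: for every ψ ∈ L(P(φ)), φ→ψ or φ→¬ψ is valid for l. -/
def Complete (l : Logic) (φ : Form) : Prop :=
  ∀ ψ : Form, ψ.vars ⊆ φ.vars → (Valid l (φ.imp ψ) ∨ Valid l (φ.imp ψ.neg))

/-- Z is a bisimulation modulo P from M to M'. -/
def IsBisim (P : Set ℕ) (M M' : Model) (Z : M.W → M'.W → Prop) : Prop :=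
  (∃ s s', Z s s') ∧
  ∀ s s', Z s s' →
    (M.V s ∩ P = M'.V s' ∩ P) ∧
    (∀ t, M.R s t → ∃ t', M'.R s' t' ∧ Z t t') ∧
    (∀ t', M'.R s' t' → ∃ t, M.R s t ∧ Z t t')

/-- (M,a) ∼_P (M',a'). -/
def Bisimilar (P : Set ℕ) (M : Model) (a : M.W) (M' : Model) (a' : M'.W) : Prop :=
  ∃ Z, IsBisim P M M' Z ∧ Z a a'

/-- (M,a) ≡_P (M',a'): the two pointed models satisfy the same formulas of L(P). -/
def EquivP (P : Set ℕ) (M : Model) (a : M.W) (M' : Model) (a' : M'.W) : Prop :=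
  ∀ φ : Form, ↑φ.vars ⊆ P → (M.sat a φ ↔ M'.sat a' φ)

/-- (M,s) is flat (for base logic l, with axiom 5): the carrier is {s}∪W and
R = R1 ∪ R2 with R1 ⊆ {s}×W, R2 an equivalence relation on W, and s ∈ W if
l ∈ {T,S4}. -/
def Flat (l : BaseLogic) (M : Model) (s : M.W) : Prop :=
  ∃ W : Set M.W, (∀ w, w = s ∨ w ∈ W) ∧
    ∃ R1 R2 : M.W → M.W → Prop,
      (∀ x y, M.R x y ↔ (R1 x y ∨ R2 x y)) ∧
      (∀ x y, R1 x y → x = s ∧ y ∈ W) ∧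
      (∀ x y, R2 x y → x ∈ W ∧ y ∈ W) ∧
      (∀ x ∈ W, R2 x x) ∧
      (∀ x y, R2 x y → R2 y x) ∧
      (∀ x y z, R2 x y → R2 y z → R2 x z) ∧
      ((l = .T ∨ l = .S4) → s ∈ W)

/-- A maximal state for l with respect to φ: a maximally l-consistent subset
of s̄ub(φ). -/
def MaxState (l : Logic) (φ : Form) (a : Finset Form) : Prop :=
  a ⊆ φ.subBar ∧ Satisfiable l (th a) ∧ ∀ ψ ∈ φ.subf, ψ ∈ a ∨ ψ.neg ∈ a

/-- D(x) = {◇ψ : ◇ψ ∈ x}. -/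
def DSet (x : Finset Form) : Finset Form := x.filter (fun ψ => ψ.isDia = true)

/-- B(x) = {□ψ : □ψ ∈ x}. -/
def BSet (x : Finset Form) : Finset Form := x.filter (fun ψ => ψ.isBox = true)

/-- A view: a parent-state and a finite set of children-states. -/
structure View : Type where
  parent : Finset Form
  children : Finset (Finset Form)

/-- The view is with respect to φ: all its states are subsets of s̄ub(φ). -/
def View.WF (φ : Form) (S : View) : Prop :=
  S.parent ⊆ φ.subBar ∧ ∀ c ∈ S.children, c ⊆ φ.subBar

/-- A set of formulas is l-closed. -/
def LClosed (l : Logic) (P : Finset ℕ) (s : Finset Form) : Prop :=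
  (∀ φ1 φ2 : Form, Form.and φ1 φ2 ∈ s → φ1 ∈ s ∧ φ2 ∈ s) ∧
  (∀ φ1 φ2 : Form, Form.or φ1 φ2 ∈ s → φ1 ∈ s ∨ φ2 ∈ s) ∧
  ((l.base = .T ∨ l.base = .S4) → ∀ ψ : Form, Form.box ψ ∈ s → ψ ∈ s) ∧
  (∀ p ∈ P, Form.pos p ∈ s ∨ Form.npos p ∈ s)

/-- The view S is l-complete. -/
def ViewLComplete (l : Logic) (P : Finset ℕ) (S : View) : Prop :=
  LClosed l P S.parent ∧
  (∀ c ∈ S.children, LClosed l P c) ∧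
  (∀ ψ : Form, Form.dia ψ ∈ S.parent → ∃ c ∈ S.children, ψ ∈ c) ∧
  (∀ ψ : Form, Form.box ψ ∈ S.parent → ∀ c ∈ S.children, ψ ∈ c) ∧
  ((l.base = .K4 ∨ l.base = .KD4 ∨ l.base = .S4) →
    ∀ ψ : Form, Form.box ψ ∈ S.parent → ∀ c ∈ S.children, Form.box ψ ∈ c) ∧
  (l.base = .KD4 → S.children.Nonempty)

/-- The view S is consistent for l: every one of its states is consistent. -/
def ViewConsistent (l : Logic) (S : View) : Prop :=
  Satisfiable l (th S.parent) ∧ ∀ c ∈ S.children, Satisfiable l (th c)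

/-- d = max{md(th(c')) : c' ∈ C(S)}. -/
noncomputable def childDepth (S : View) : ℕ := S.children.sup (fun c => (th c).md)

/-- A K-maximal child-state: a maximally K-consistent subset of s̄ub_d(φ). -/
def KMaxChild (φ : Form) (d : ℕ) (c : Finset Form) : Prop :=
  c ⊆ φ.subBar.filter (fun ψ => ψ.md ≤ d) ∧
  Satisfiable Logic.K (th c) ∧
  ∀ ψ ∈ φ.subf, ψ.md ≤ d → (ψ ∈ c ∨ ψ.neg ∈ c)

/-- S' completes S (for logic l, with respect to φ). -/
def ViewCompletes (l : Logic) (φ : Form) (S' S : View) : Prop :=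
  ViewLComplete l φ.vars S' ∧
  S.parent ⊆ S'.parent ∧
  (∀ a ∈ S.children, ∃ a' ∈ S'.children, a ⊆ a') ∧
  (l.base = .K → ∀ a' ∈ S'.children, KMaxChild φ (childDepth S') a') ∧
  (l.base ≠ .K → ∀ a' ∈ S'.children, MaxState l φ a')

/-- The depth-0 normal form ⋀_{p∈S} p ∧ ⋀_{p∈P∖S} ¬p. -/
noncomputable def nf0 (P S : Finset ℕ) : Form :=
  Form.and (bigAnd (S.image Form.pos)) (bigAnd ((P \ S).image Form.npos))

/-- Fine's normal forms F_P^d. -/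
noncomputable def NF (P : Finset ℕ) : ℕ → Set Form
  | 0 => { χ | ∃ S ⊆ P, χ = nf0 P S }
  | d + 1 => { χ | ∃ S : Finset Form, ↑S ⊆ NF P d ∧ ∃ S0 ⊆ P,
      χ = Form.and (nf0 P S0)
            (Form.and (bigAnd (S.image Form.dia)) (Form.box (bigOr S))) }

/-- φ is complete up to its depth for l. -/
def CompleteUpToDepth (l : Logic) (φ : Form) : Prop :=
  ∀ ψ : Form, ψ.vars ⊆ φ.vars → ψ.md ≤ φ.md →
    (Valid l (φ.imp ψ) ∨ Valid l (φ.imp ψ.neg))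


section Aux

lemma vars_neg : ∀ φ : Form, φ.neg.vars = φ.vars := by
  intro φ; induction φ <;> simp [Form.neg, Form.vars, *]

lemma sat_neg (M : Model) : ∀ (φ : Form) (w : M.W), M.sat w φ.neg ↔ ¬ M.sat w φ := by
  intro φ
  induction φ with
  | bot => intro w; simp [Form.neg, Model.sat]
  | top => intro w; simp [Form.neg, Model.sat]
  | pos p => intro w; simp [Form.neg, Model.sat]
  | npos p => intro w; simp [Form.neg, Model.sat]
  | and φ ψ ih1 ih2 =>
      intro w
      simp only [Form.neg, Model.sat, ih1, ih2]
      tauto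
  | or φ ψ ih1 ih2 =>
      intro w
      simp only [Form.neg, Model.sat, ih1, ih2]
      tauto
  | box φ ih =>
      intro w
      simp only [Form.neg, Model.sat, ih, not_forall, Classical.not_imp, exists_prop]
  | dia φ ih =>
      intro w
      simp only [Form.neg, Model.sat, ih, not_exists, not_and]

lemma sat_foldr_and (M : Model) (w : M.W) : ∀ L : List Form,
    M.sat w (L.foldr Form.and Form.top) ↔ ∀ ψ ∈ L, M.sat w ψ := by
  intro L
  induction L with
  | nil => simp [Model.sat]
  | cons a L ih => simp [Model.sat, ih]

lemma sat_bigAnd (M : Model) (w : M.W) (s : Finset Form) :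
    M.sat w (bigAnd s) ↔ ∀ ψ ∈ s, M.sat w ψ := by
  rw [bigAnd, sat_foldr_and]
  simp

lemma vars_foldr_and (P : Set ℕ) : ∀ L : List Form, (∀ ψ ∈ L, ↑ψ.vars ⊆ P) →
    ↑(L.foldr Form.and Form.top).vars ⊆ P := by
  intro L
  induction L with
  | nil => simp [Form.vars]
  | cons a L ih =>
      intro h
      simp only [List.foldr_cons, Form.vars, Finset.coe_union, Set.union_subset_iff]
      exact ⟨h a (by simp), ih (fun ψ hψ => h ψ (by simp [hψ]))⟩

lemma vars_bigAnd (P : Set ℕ) (s : Finset Form) (h : ∀ ψ ∈ s, ↑ψ.vars ⊆ P) :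
    ↑(bigAnd s).vars ⊆ P := by
  rw [bigAnd]
  exact vars_foldr_and P _ (fun ψ hψ => h ψ (by simpa using hψ))

lemma not_equiv {P : Set ℕ} {M M' : Model} {a : M.W} {a' : M'.W}
    (h : ¬ EquivP P M a M' a') :
    ∃ ψ : Form, ↑ψ.vars ⊆ P ∧ M.sat a ψ ∧ ¬ M'.sat a' ψ := by
  unfold EquivP at h
  push_neg at h
  obtain ⟨ψ, hv, hne⟩ := h
  rcases hne with ⟨hs, hs'⟩ | ⟨hs, hs'⟩
  · exact ⟨ψ, hv, hs, hs'⟩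
  · refine ⟨ψ.neg, by rw [vars_neg]; exact hv, (sat_neg M ψ a).2 hs, ?_⟩
    rw [sat_neg]
    exact not_not_intro hs' 

lemma equivP_symm {P : Set ℕ} {M M' : Model} {a : M.W} {a' : M'.W}
    (h : EquivP P M a M' a') : EquivP P M' a' M a :=
  fun ψ hv => (h ψ hv).symm

lemma bisim_equiv (P : Set ℕ) (M M' : Model) (Z : M.W → M'.W → Prop)
    (hZ : IsBisim P M M' Z) :
    ∀ φ : Form, ↑φ.vars ⊆ P → ∀ a a', Z a a' → (M.sat a φ ↔ M'.sat a' φ) := by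
  intro φ
  induction φ with
  | bot => intro _ a a' _; simp [Model.sat]
  | top => intro _ a a' _; simp [Model.sat]
  | pos p =>
      intro hv a a' h
      have hV := (hZ.2 a a' h).1
      have hp : p ∈ P := hv (by simp [Form.vars])
      simp only [Model.sat]
      constructor
      · intro hpa
        have : p ∈ M'.V a' ∩ P := hV ▸ (⟨hpa, hp⟩ : p ∈ M.V a ∩ P)
        exact this.1
      · intro hpa
        have : p ∈ M.V a ∩ P := hV ▸ (⟨hpa, hp⟩ : p ∈ M'.V a' ∩ P)
        exact this.1
  | npos p =>
      intro hv a a' h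
      have hV := (hZ.2 a a' h).1
      have hp : p ∈ P := hv (by simp [Form.vars])
      simp only [Model.sat]
      constructor
      · intro hpa hmem
        exact hpa (by have : p ∈ M.V a ∩ P := hV.symm ▸ (⟨hmem, hp⟩ : p ∈ M'.V a' ∩ P); exact this.1)
      · intro hpa hmem
        exact hpa (by have : p ∈ M'.V a' ∩ P := hV ▸ (⟨hmem, hp⟩ : p ∈ M.V a ∩ P); exact this.1)
  | and φ ψ ih1 ih2 =>
      intro hv a a' h
      have hv1 : ↑φ.vars ⊆ P := fun x hx => hv (by simp only [Form.vars, Finset.coe_union]; exact Or.inl hx)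
      have hv2 : ↑ψ.vars ⊆ P := fun x hx => hv (by simp only [Form.vars, Finset.coe_union]; exact Or.inr hx)
      simp only [Model.sat, ih1 hv1 a a' h, ih2 hv2 a a' h]
  | or φ ψ ih1 ih2 =>
      intro hv a a' h
      have hv1 : ↑φ.vars ⊆ P := fun x hx => hv (by simp only [Form.vars, Finset.coe_union]; exact Or.inl hx)
      have hv2 : ↑ψ.vars ⊆ P := fun x hx => hv (by simp only [Form.vars, Finset.coe_union]; exact Or.inr hx)
      simp only [Model.sat, ih1 hv1 a a' h, ih2 hv2 a a' h]
  | box φ ih =>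
      intro hv a a' h
      simp only [Model.sat]
      constructor
      · intro hb t' ht'
        obtain ⟨t, ht, hZt⟩ := (hZ.2 a a' h).2.2 t' ht'
        exact (ih hv t t' hZt).1 (hb t ht)
      · intro hb t ht
        obtain ⟨t', ht', hZt⟩ := (hZ.2 a a' h).2.1 t ht
        exact (ih hv t t' hZt).2 (hb t' ht')
  | dia φ ih =>
      intro hv a a' h
      simp only [Model.sat]
      constructor
      · rintro ⟨t, ht, hs⟩
        obtain ⟨t', ht', hZt⟩ := (hZ.2 a a' h).2.1 t ht
        exact ⟨t', ht', (ih hv t t' hZt).1 hs⟩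
      · rintro ⟨t', ht', hs⟩
        obtain ⟨t, ht, hZt⟩ := (hZ.2 a a' h).2.2 t' ht'
        exact ⟨t, ht, (ih hv t t' hZt).2 hs⟩

lemma bisimilar_equiv {P : Set ℕ} {M M' : Model} {a : M.W} {a' : M'.W}
    (h : Bisimilar P M a M' a') : EquivP P M a M' a' := by
  obtain ⟨Z, hZ, hZa⟩ := h
  exact fun ψ hv => bisim_equiv P M M' Z hZ ψ hv a a' hZa

lemma equiv_to_bisim (P : Set ℕ) (M M' : Model) (a : M.W) (a' : M'.W)
    (h : EquivP P M a M' a') : Bisimilar P M a M' a' := by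
  refine ⟨fun s s' => EquivP P M s M' s', ⟨⟨a, a', h⟩, ?_⟩, h⟩
  intro s s' hss'
  refine ⟨?_, ?_, ?_⟩
  · ext p
    constructor
    · rintro ⟨hp, hP⟩
      have := (hss' (Form.pos p) (by simpa [Form.vars] using hP)).1 hp
      exact ⟨this, hP⟩
    · rintro ⟨hp, hP⟩
      have := (hss' (Form.pos p) (by simpa [Form.vars] using hP)).2 hp
      exact ⟨this, hP⟩
  · -- forth
    intro t ht
    by_contra hc
    push_neg at hc
    haveI := M'.finite
    haveI : Fintype M'.W := Fintype.ofFinite _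
    have hex : ∀ t' : M'.W, ∃ ψ : Form,
        ↑ψ.vars ⊆ P ∧ M.sat t ψ ∧ (M'.R s' t' → ¬ M'.sat t' ψ) := by
      intro t'
      by_cases hr : M'.R s' t'
      · obtain ⟨ψ, h1, h2, h3⟩ := not_equiv (hc t' hr)
        exact ⟨ψ, h1, h2, fun _ => h3⟩
      · exact ⟨Form.top, by simp [Form.vars], trivial, fun hr' => absurd hr' hr⟩
    choose f hf1 hf2 hf3 using hex
    set S : Finset Form := Finset.univ.image f with hS
    have hχv : ↑(bigAnd S).vars ⊆ P := by
      refine vars_bigAnd P S ?_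
      intro ψ hψ
      simp only [hS, Finset.mem_image, Finset.mem_univ, true_and] at hψ
      obtain ⟨t'', rfl⟩ := hψ
      exact hf1 t''
    have hχt : M.sat t (bigAnd S) := by
      rw [sat_bigAnd]
      intro ψ hψ
      simp only [hS, Finset.mem_image, Finset.mem_univ, true_and] at hψ
      obtain ⟨t'', rfl⟩ := hψ
      exact hf2 t''
    have hdia : M.sat s (Form.dia (bigAnd S)) := ⟨t, ht, hχt⟩
    have := (hss' (Form.dia (bigAnd S)) (by simpa [Form.vars] using hχv)).1 hdia
    obtain ⟨t', hrt', hsat⟩ := this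
    exact hf3 t' hrt' ((sat_bigAnd M' t' S).1 hsat (f t') (by simp [hS]))
  · -- back
    intro t' ht'
    by_contra hc
    push_neg at hc
    haveI := M.finite
    haveI : Fintype M.W := Fintype.ofFinite _
    have hex : ∀ t : M.W, ∃ ψ : Form,
        ↑ψ.vars ⊆ P ∧ M'.sat t' ψ ∧ (M.R s t → ¬ M.sat t ψ) := by
      intro t
      by_cases hr : M.R s t
      · obtain ⟨ψ, h1, h2, h3⟩ := not_equiv (fun he => hc t hr (equivP_symm he))
        exact ⟨ψ, h1, h2, fun _ => h3⟩
      · exact ⟨Form.top, by simp [Form.vars], trivial, fun hr' => absurd hr' hr⟩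
    choose f hf1 hf2 hf3 using hex
    set S : Finset Form := Finset.univ.image f with hS
    have hχv : ↑(bigAnd S).vars ⊆ P := by
      refine vars_bigAnd P S ?_
      intro ψ hψ
      simp only [hS, Finset.mem_image, Finset.mem_univ, true_and] at hψ
      obtain ⟨t'', rfl⟩ := hψ
      exact hf1 t''
    have hχt : M'.sat t' (bigAnd S) := by
      rw [sat_bigAnd]
      intro ψ hψ
      simp only [hS, Finset.mem_image, Finset.mem_univ, true_and] at hψ
      obtain ⟨t'', rfl⟩ := hψ
      exact hf2 t''
    have hdia : M'.sat s' (Form.dia (bigAnd S)) := ⟨t', ht', hχt⟩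
    have := (hss' (Form.dia (bigAnd S)) (by simpa [Form.vars] using hχv)).2 hdia
    obtain ⟨t, hrt, hsat⟩ := this
    exact hf3 t hrt ((sat_bigAnd M t S).1 hsat (f t) (by simp [hS]))

lemma flatten (l : BaseLogic) (M : Model) (hM : M.IsFor l.plus5) (a : M.W) :
    ∃ (N : Model) (s : N.W), N.IsFor l.plus5 ∧ Flat l N s ∧
      ∀ P : Set ℕ, Bisimilar P N s M a := by
  have heu : ∀ x y z, M.R x y → M.R x z → M.R y z := hM.2 rfl
  set T : Set M.W := {w | Relation.TransGen M.R a w} with hT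
  have hTcl : ∀ {b c}, b ∈ T → M.R b c → c ∈ T := fun hb h => hb.tail h
  have hTa : ∀ {c}, M.R a c → c ∈ T := fun h => Relation.TransGen.single h
  have hTrefl : ∀ b ∈ T, M.R b b := by
    intro b hb
    induction hb with
    | single h => exact heu _ _ _ h h
    | tail h1 h2 ih => exact heu _ _ _ h2 h2
  have hTsymm : ∀ b ∈ T, ∀ c, M.R b c → M.R c b :=
    fun b hb c h => heu _ _ _ h (hTrefl b hb)
  have hTtrans : ∀ b ∈ T, ∀ c d, M.R b c → M.R c d → M.R b d :=
    fun b hb c d h1 h2 => heu _ _ _ (hTsymm b hb c h1) h2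
  haveI := M.finite
  let N : Model :=
    { W := {w : M.W // w = a ∨ w ∈ T}
      nonempty := ⟨⟨a, Or.inl rfl⟩⟩
      finite := Subtype.finite
      R := fun x y => M.R x.val y.val
      V := fun x => M.V x.val }
  have hsucc : ∀ (x : N.W) (w : M.W), M.R x.val w → w ∈ T := by
    rintro ⟨x, (rfl | hx)⟩ w h
    · exact hTa h
    · exact hTcl hx h
  refine ⟨N, ⟨a, Or.inl rfl⟩, ⟨?_, ?_⟩, ?_, ?_⟩
  · -- base frame conditions
    cases l with
    | K => trivial
    | D =>
        intro x
        obtain ⟨v, hv⟩ := hM.1 x.val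
        exact ⟨⟨v, Or.inr (hsucc x v hv)⟩, hv⟩
    | T => intro x; exact hM.1 x.val
    | K4 => intro x y z h1 h2; exact hM.1 _ _ _ h1 h2
    | KD4 =>
        constructor
        · intro x
          obtain ⟨v, hv⟩ := hM.1.1 x.val
          exact ⟨⟨v, Or.inr (hsucc x v hv)⟩, hv⟩
        · intro x y z h1 h2; exact hM.1.2 _ _ _ h1 h2
    | S4 =>
        constructor
        · intro x; exact hM.1.1 x.val
        · intro x y z h1 h2; exact hM.1.2 _ _ _ h1 h2
  · -- euclidean
    intro _ x y z h1 h2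
    exact heu _ _ _ h1 h2
  · -- Flat
    refine ⟨{x : N.W | x.val ∈ T}, ?_,
      (fun x y => x = ⟨a, Or.inl rfl⟩ ∧ M.R a y.val),
      (fun x y => x.val ∈ T ∧ y.val ∈ T ∧ M.R x.val y.val),
      ?_, ?_, ?_, ?_, ?_, ?_, ?_⟩
    · rintro ⟨w, (rfl | hw)⟩
      · exact Or.inl rfl
      · exact Or.inr hw
    · rintro ⟨x, hx⟩ y
      constructor
      · intro h
        rcases hx with rfl | hxT
        · exact Or.inl ⟨rfl, h⟩
        · exact Or.inr ⟨hxT, hTcl hxT h, h⟩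
      · rintro (⟨hx, h⟩ | ⟨_, _, h⟩)
        · have : x = a := congrArg Subtype.val hx
          subst this
          exact h
        · exact h
    · rintro x y ⟨rfl, h⟩
      exact ⟨rfl, hTa h⟩
    · rintro x y ⟨hx, hy, _⟩
      exact ⟨hx, hy⟩
    · intro x hx
      exact ⟨hx, hx, hTrefl _ hx⟩
    · rintro x y ⟨hx, hy, h⟩
      exact ⟨hy, hx, hTsymm _ hx _ h⟩
    · rintro x y z ⟨hx, hy, h1⟩ ⟨_, hz, h2⟩
      exact ⟨hx, hz, hTtrans _ hx _ _ h1 h2⟩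
    · intro hl
      have haa : M.R a a := by
        rcases hl with rfl | rfl
        · exact hM.1 a
        · exact hM.1.1 a
      exact hTa haa
  · -- Bisimilar
    intro P
    refine ⟨fun x w => x.val = w, ⟨⟨⟨a, Or.inl rfl⟩, a, rfl⟩, ?_⟩, rfl⟩
    rintro x w rfl
    exact ⟨rfl, fun t ht => ⟨t.val, ht, rfl⟩,
      fun t' ht' => ⟨⟨t', Or.inr (hsucc x t' ht')⟩, ht', rfl⟩⟩

end Aux

/-- φ is incomplete for l+5 iff it has two non-bisimilar
(modulo P(φ)) flat pointed models for l+5. -/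
theorem stmt4 (l : BaseLogic) (φ : Form) :
    ¬ Complete l.plus5 φ ↔
      ∃ (M : Model) (a : M.W) (M' : Model) (a' : M'.W),
        M.IsFor l.plus5 ∧ M'.IsFor l.plus5 ∧
        Flat l M a ∧ Flat l M' a' ∧
        M.sat a φ ∧ M'.sat a' φ ∧
        ¬ Bisimilar ↑φ.vars M a M' a' := by
  constructor
  · intro h
    unfold Complete at h
    push_neg at h
    obtain ⟨ψ, hv, h1, h2⟩ := h
    unfold Valid at h1 h2
    push_neg at h1 h2
    obtain ⟨M1, hM1, w1, hw1⟩ := h1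
    obtain ⟨M2, hM2, w2, hw2⟩ := h2
    simp only [Form.imp, Model.sat, sat_neg, not_or, not_not] at hw1 hw2
    obtain ⟨hw1φ, hw1ψ⟩ := hw1
    obtain ⟨hw2φ, hw2ψ⟩ := hw2
    obtain ⟨N1, s1, hN1, hF1, hB1⟩ := flatten l M1 hM1 w1
    obtain ⟨N2, s2, hN2, hF2, hB2⟩ := flatten l M2 hM2 w2
    have hE1 : EquivP ↑φ.vars N1 s1 M1 w1 := bisimilar_equiv (hB1 _)
    have hE2 : EquivP ↑φ.vars N2 s2 M2 w2 := bisimilar_equiv (hB2 _)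
    have hvs : (↑ψ.vars : Set ℕ) ⊆ ↑φ.vars := Finset.coe_subset.2 hv
    refine ⟨N1, s1, N2, s2, hN1, hN2, hF1, hF2,
      (hE1 φ subset_rfl).2 hw1φ, (hE2 φ subset_rfl).2 hw2φ, ?_⟩
    intro hb
    have hE : EquivP ↑φ.vars N1 s1 N2 s2 := bisimilar_equiv hb
    have : M1.sat w1 ψ := by
      rw [← (hE1 ψ hvs), (hE ψ hvs), (hE2 ψ hvs)]
      exact hw2ψ
    exact hw1ψ this
  · rintro ⟨M, aM, M', aM', hM, hM', _, _, hsat, hsat', hnb⟩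
    intro hcomp
    have hne : ¬ EquivP ↑φ.vars M aM M' aM' :=
      fun he => hnb (equiv_to_bisim _ _ _ _ _ he)
    obtain ⟨ψ, hv, h1, h2⟩ := not_equiv hne
    rcases hcomp ψ (Finset.coe_subset.1 hv) with hval | hval
    · have := hval M' hM' aM'
      simp only [Form.imp, Model.sat, sat_neg] at this
      rcases this with h | h
      · exact h hsat'
      · exact h2 h
    · have := hval M hM aM
      simp only [Form.imp, Model.sat, sat_neg] at this
      rcases this with h | h
      · exact h hsat
      · exact h h1
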